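/- arXiv:2412.03638 — 4 statements merged into one kernel-verified Lean document; each statement's English description precedes it below -/
import Mathlib

section
/- In the symmetric group S_8, the subgroup generated by the 3-cycles (1 5 4), (2 6 5), (2 3 5), and (5 8 7) is the alternating group A_8. -/
open Equiv Equiv.Perm Subgroup

private abbrev vacGens : Set (Equiv.Perm (Fin 8)) :=
  {swap (0 : Fin 8) 3 * swap 0 4,
   swap (1 : Fin 8) 4 * swap 1 5,
   swap (1 : Fin 8) 4 * swap 1 2,
   swap (4 : Fin 8) 6 * swap 4 7}

private abbrev Hvac : Subgroup (Equiv.Perm (Fin 8)) := Subgroup.closure vacGens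

private lemma hg1 : swap (0 : Fin 8) 3 * swap 0 4 ∈ Hvac := subset_closure (by simp [vacGens])
private lemma hg2 : swap (1 : Fin 8) 4 * swap 1 5 ∈ Hvac := subset_closure (by simp [vacGens])
private lemma hg3 : swap (1 : Fin 8) 4 * swap 1 2 ∈ Hvac := subset_closure (by simp [vacGens])
private lemma hg4 : swap (4 : Fin 8) 6 * swap 4 7 ∈ Hvac := subset_closure (by simp [vacGens])

private lemma t_mem : ∀ k : Fin 8, k ≠ 0 → swap (0 : Fin 8) k * swap 0 1 ∈ Hvac := by
  intro k hk
  fin_cases k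
  · exact absurd rfl hk
  · show swap (0 : Fin 8) 1 * swap 0 1 ∈ Hvac
    rw [show swap (0 : Fin 8) 1 * swap 0 1 = 1 from by decide]
    exact one_mem _
  · -- t2 = a⁻¹ * c * a
    show swap (0 : Fin 8) 2 * swap 0 1 ∈ Hvac
    rw [show swap (0 : Fin 8) 2 * swap 0 1 =
        (swap (0:Fin 8) 3 * swap 0 4)⁻¹ * (swap 1 4 * swap 1 2) * (swap 0 3 * swap 0 4)
      from by decide]
    exact mul_mem (mul_mem (inv_mem hg1) hg3) hg1
  · -- t3 = b * a * b⁻¹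
    show swap (0 : Fin 8) 3 * swap 0 1 ∈ Hvac
    rw [show swap (0 : Fin 8) 3 * swap 0 1 =
        (swap (1:Fin 8) 4 * swap 1 5) * (swap 0 3 * swap 0 4) * (swap (1:Fin 8) 4 * swap 1 5)⁻¹
      from by decide]
    exact mul_mem (mul_mem hg2 hg1) (inv_mem hg2)
  · -- t4 = a⁻¹ * b * a * b⁻¹
    show swap (0 : Fin 8) 4 * swap 0 1 ∈ Hvac
    rw [show swap (0 : Fin 8) 4 * swap 0 1 =
        (swap (0:Fin 8) 3 * swap 0 4)⁻¹ * (swap 1 4 * swap 1 5) * (swap 0 3 * swap 0 4) *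
          (swap (1:Fin 8) 4 * swap 1 5)⁻¹
      from by decide]
    exact mul_mem (mul_mem (mul_mem (inv_mem hg1) hg2) hg1) (inv_mem hg2)
  · -- t5 = a⁻¹ * b * a
    show swap (0 : Fin 8) 5 * swap 0 1 ∈ Hvac
    rw [show swap (0 : Fin 8) 5 * swap 0 1 =
        (swap (0:Fin 8) 3 * swap 0 4)⁻¹ * (swap 1 4 * swap 1 5) * (swap 0 3 * swap 0 4)
      from by decide]
    exact mul_mem (mul_mem (inv_mem hg1) hg2) hg1
  · -- t6 = b * d⁻¹ * a⁻¹ * d * a * b⁻¹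
    show swap (0 : Fin 8) 6 * swap 0 1 ∈ Hvac
    rw [show swap (0 : Fin 8) 6 * swap 0 1 =
        (swap (1:Fin 8) 4 * swap 1 5) * (swap (4:Fin 8) 6 * swap 4 7)⁻¹ *
          (swap (0:Fin 8) 3 * swap 0 4)⁻¹ * (swap (4:Fin 8) 6 * swap 4 7) *
          (swap (0:Fin 8) 3 * swap 0 4) * (swap (1:Fin 8) 4 * swap 1 5)⁻¹
      from by decide]
    exact mul_mem (mul_mem (mul_mem (mul_mem (mul_mem hg2 (inv_mem hg4)) (inv_mem hg1)) hg4)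
      hg1) (inv_mem hg2)
  · -- t7 = b * d * a⁻¹ * d⁻¹ * a * b⁻¹
    show swap (0 : Fin 8) 7 * swap 0 1 ∈ Hvac
    rw [show swap (0 : Fin 8) 7 * swap 0 1 =
        (swap (1:Fin 8) 4 * swap 1 5) * (swap (4:Fin 8) 6 * swap 4 7) *
          (swap (0:Fin 8) 3 * swap 0 4)⁻¹ * (swap (4:Fin 8) 6 * swap 4 7)⁻¹ *
          (swap (0:Fin 8) 3 * swap 0 4) * (swap (1:Fin 8) 4 * swap 1 5)⁻¹
      from by decide]
    exact mul_mem (mul_mem (mul_mem (mul_mem (mul_mem hg2 hg4) (inv_mem hg1)) (inv_mem hg4))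
      hg1) (inv_mem hg2)

private lemma swap_mul_mem (x y : Fin 8) (h : x ≠ y) : swap x y * swap 0 1 ∈ Hvac := by
  rcases eq_or_ne x 0 with rfl | hx
  · exact t_mem y (Ne.symm h)
  rcases eq_or_ne y 0 with rfl | hy
  · rw [swap_comm]
    exact t_mem x hx
  · have hxy : swap x y = swap (0 : Fin 8) x * swap 0 y * swap 0 x := by
      have := swap_apply_apply (swap (0 : Fin 8) x) 0 y
      rw [swap_apply_left, swap_apply_of_ne_of_ne hy (Ne.symm h), swap_inv] at this
      rw [this]
    have key : swap x y * swap (0 : Fin 8) 1 =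
        (swap 0 x * swap 0 1) * (swap 0 y * swap 0 1)⁻¹ * (swap 0 x * swap 0 1) := by
      rw [hxy, mul_inv_rev, swap_inv, swap_inv]
      simp only [mul_assoc, swap_mul_self_mul]
    rw [key]
    exact mul_mem (mul_mem (t_mem x hx) (inv_mem (t_mem y hy))) (t_mem x hx)

private lemma alternating_le_Hvac : alternatingGroup (Fin 8) ≤ Hvac := by
  suffices h : ∀ g : Equiv.Perm (Fin 8),
      (Perm.sign g = 1 → g ∈ Hvac) ∧ (Perm.sign g ≠ 1 → swap (0:Fin 8) 1 * g ∈ Hvac) by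
    intro f hf
    rw [Equiv.Perm.mem_alternatingGroup] at hf
    exact (h f).1 hf
  intro g
  induction g using Equiv.Perm.swap_induction_on
  case _ =>
    refine ⟨fun _ => one_mem _, fun hs => absurd ?_ hs⟩
    simp
  case _ f x y hxy ih =>
    have hs : Perm.sign (swap x y * f) = - Perm.sign f := by
      rw [map_mul, sign_swap hxy, neg_one_mul]
    constructor
    · intro h1
      have hf' : Perm.sign f ≠ 1 := by
        intro hh
        rw [hs, hh] at h1
        exact absurd h1 (by decide)
      have := ih.2 hf'
      have : (swap x y * swap 0 1) * (swap (0:Fin 8) 1 * f) ∈ Hvac :=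
        mul_mem (swap_mul_mem x y hxy) this
      rwa [show (swap x y * swap (0:Fin 8) 1) * (swap 0 1 * f) = swap x y * f by simp only [mul_assoc, swap_mul_self_mul]] at this
    · intro h1
      have hf' : Perm.sign f = 1 := by
        by_contra hh
        rw [hs] at h1
        rcases Int.units_eq_one_or (Perm.sign f) with h | h
        · exact hh h
        · rw [h] at h1; exact h1 (by decide)
      have := mul_mem (inv_mem (swap_mul_mem x y hxy)) (ih.1 hf')
      rwa [show (swap x y * swap (0:Fin 8) 1)⁻¹ * f = swap 0 1 * (swap x y * f) from by
        rw [mul_inv_rev, swap_inv, swap_inv, mul_assoc]] at this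

open Equiv in
/-- In `S_8`, the subgroup generated by the 3-cycles
`(1 5 4)`, `(2 6 5)`, `(2 3 5)`, `(5 8 7)` is the alternating group `A_8`.
We index `{1,…,8}` by `Fin 8 = {0,…,7}`; a 3-cycle `(a b c)` (mapping
`a ↦ b ↦ c ↦ a`) is written as `swap a c * swap a b`. -/
theorem closure_vacancy_three_cycles_eq_alternating :
    Subgroup.closure
        ({swap (0 : Fin 8) 3 * swap 0 4,   -- (1 5 4)
          swap (1 : Fin 8) 4 * swap 1 5,   -- (2 6 5)
          swap (1 : Fin 8) 4 * swap 1 2,   -- (2 3 5)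
          swap (4 : Fin 8) 6 * swap 4 7}   -- (5 8 7)
          : Set (Equiv.Perm (Fin 8))) = alternatingGroup (Fin 8) := by
  apply le_antisymm
  · rw [Subgroup.closure_le]
    intro x hx
    simp only [Set.mem_insert_iff, Set.mem_singleton_iff] at hx
    rcases hx with rfl | rfl | rfl | rfl <;>
      · rw [SetLike.mem_coe, Equiv.Perm.mem_alternatingGroup, map_mul,
          Equiv.Perm.sign_swap (by decide), Equiv.Perm.sign_swap (by decide)]
        decide
  · exact alternating_le_Hvac
end

section
/- Let M be a real symmetric N×N matrix with nonpositive off-diagonal entries, and let ψ ∈ ℝ^N. Define ψ_F ∈ ℝ^N by grouping coordinates: suppose the index set is a product I × S and (ψ_F)_{I} = sqrt(Σ_σ ψ_{(I,σ)}²) with the S-coordinate collapsed. If the off-diagonal structure satisfies M_{(I',σ'),(I,σ)} = -t·A_F(I',I)·δ(σ', f_{I'I}(σ)) with t ≥ 0, A_F(I',I) ∈ {0,1}, and f_{I'I} : S → S a function, then ⟨ψ, Mψ⟩ ≥ -t Σ_{I,I'} A_F(I',I)·(ψ_F)_{I'}·(ψ_F)_I. -/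
open Finset in
/-- Cauchy–Schwarz step: Let `M` be a real matrix indexed by
`I × S` with `M (i',σ') (i,σ) = -t · A i' i · δ(σ', f i' i σ)` where `t ≥ 0`,
`A i' i ∈ {0,1}`, and each `f i' i : S → S` is a (injective, since at most one
final spin pattern connects each pair of states) function. Then the quadratic
form `⟨ψ, Mψ⟩` is bounded below by
`-t Σ_{I,I'} A(I',I) (ψ_F)_{I'} (ψ_F)_I`, where `(ψ_F)_I = √(Σ_σ ψ(I,σ)²)`. -/
theorem cauchy_schwarz_ferro_bound (I S : Type*) [Fintype I] [Fintype S]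
    [DecidableEq S]
    (t : ℝ) (ht : 0 ≤ t) (A : I → I → ℝ)
    (hA : ∀ i' i, A i' i = 0 ∨ A i' i = 1)
    (f : I → I → S → S) (hf : ∀ i' i, Function.Injective (f i' i))
    (M : Matrix (I × S) (I × S) ℝ)
    (hM : ∀ i' σ' i σ, M (i', σ') (i, σ) =
      -t * A i' i * (if σ' = f i' i σ then 1 else 0))
    (ψ : I × S → ℝ) :
    -t * ∑ i' : I, ∑ i : I, A i' i *
        Real.sqrt (∑ σ : S, ψ (i', σ) ^ 2) * Real.sqrt (∑ σ : S, ψ (i, σ) ^ 2)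
      ≤ ∑ p : I × S, ∑ q : I × S, ψ p * M p q * ψ q := by
  have hRHS : ∑ p : I × S, ∑ q : I × S, ψ p * M p q * ψ q
      = -t * ∑ i' : I, ∑ i : I, A i' i * ∑ σ : S, ψ (i', f i' i σ) * ψ (i, σ) := by
    rw [Fintype.sum_prod_type]
    simp only [Fintype.sum_prod_type, hM]
    rw [Finset.mul_sum]
    refine Finset.sum_congr rfl fun i' _ => ?_
    rw [Finset.sum_comm, Finset.mul_sum]
    refine Finset.sum_congr rfl fun i _ => ?_
    rw [Finset.sum_comm, Finset.mul_sum, Finset.mul_sum]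
    refine Finset.sum_congr rfl fun σ _ => ?_
    simp only [mul_ite, ite_mul, mul_zero, zero_mul, mul_one]
    rw [Finset.sum_ite_eq' Finset.univ (f i' i σ)]
    simp only [Finset.mem_univ, if_true]
    ring
  rw [hRHS, neg_mul, neg_mul, neg_le_neg_iff]
  refine mul_le_mul_of_nonneg_left ?_ ht
  refine Finset.sum_le_sum fun i' _ => Finset.sum_le_sum fun i _ => ?_
  rcases hA i' i with h | h
  · simp [h]
  · rw [h, one_mul, one_mul]
    have hsub : ∑ σ : S, ψ (i', f i' i σ) ^ 2 ≤ ∑ σ : S, ψ (i', σ) ^ 2 := by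
      have him := Finset.sum_image (s := (Finset.univ : Finset S))
        (g := f i' i) (f := fun σ' => ψ (i', σ') ^ 2)
        (fun a _ b _ hab => hf i' i hab)
      calc ∑ σ : S, ψ (i', f i' i σ) ^ 2
          = ∑ σ' ∈ Finset.univ.image (f i' i), ψ (i', σ') ^ 2 := him.symm
        _ ≤ ∑ σ' : S, ψ (i', σ') ^ 2 :=
            Finset.sum_le_sum_of_subset_of_nonneg (Finset.subset_univ _)
              (fun _ _ _ => sq_nonneg _)
    calc ∑ σ : S, ψ (i', f i' i σ) * ψ (i, σ)
        ≤ Real.sqrt (∑ σ : S, ψ (i', f i' i σ) ^ 2) * Real.sqrt (∑ σ : S, ψ (i, σ) ^ 2) :=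
          Real.sum_mul_le_sqrt_mul_sqrt _ _ _
      _ ≤ Real.sqrt (∑ σ : S, ψ (i', σ) ^ 2) * Real.sqrt (∑ σ : S, ψ (i, σ) ^ 2) :=
          mul_le_mul_of_nonneg_right (Real.sqrt_le_sqrt hsub) (Real.sqrt_nonneg _)
end

section
/- Define a dynamics on labelled electron-vacancy configurations on a lattice where each elementary move is a transposition of one electron with one adjacent vacancy, and where each vacancy i carries a signed 1D displacement d_i along its line. Then the quantity I = sgn(Π)·(-1)^{Σ_i d_i}, where Π is the permutation of all particles relative to the initial configuration, is invariant under the dynamics. -/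
/-- Dynamics on labelled electron–vacancy configurations. A state
is a pair `(Φ, dvec)` of the permutation of all `N` particle labels relative to
the initial configuration together with the signed 1D displacement of each
vacancy along its line. An elementary move transposes one electron label with
one vacancy label and changes that vacancy's displacement by `±1`. Then
`I = sgn(Φ) · (-1)^{Σ_i d_i}` is invariant under the dynamics; since initially
`Φ = id` and `d ≡ 0`, every reachable state has `I = 1`. -/
theorem electron_vacancy_invariant (N : ℕ)
    (Elec Vac : Finset (Fin N)) (hdisj : Disjoint Elec Vac)
    (hcover : Elec ∪ Vac = Finset.univ)
    (Step : (Equiv.Perm (Fin N) × (Fin N → ℤ)) →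
            (Equiv.Perm (Fin N) × (Fin N → ℤ)) → Prop)
    (hStep : ∀ s s', Step s s' ↔
      ∃ a ∈ Elec, ∃ b ∈ Vac, ∃ ε : ℤ, (ε = 1 ∨ ε = -1) ∧
        s'.1 = Equiv.swap a b * s.1 ∧
        s'.2 = Function.update s.2 b (s.2 b + ε)) :
    (∀ s s', Step s s' →
      (Equiv.Perm.sign s'.1) * Int.negOnePow (∑ i : Fin N, s'.2 i) =
      (Equiv.Perm.sign s.1) * Int.negOnePow (∑ i : Fin N, s.2 i)) ∧
    (∀ s, Relation.ReflTransGen Step (1, fun _ => 0) s →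
      (Equiv.Perm.sign s.1) * Int.negOnePow (∑ i : Fin N, s.2 i) = 1) := by

  have key : ∀ s s', Step s s' →
      (Equiv.Perm.sign s'.1) * Int.negOnePow (∑ i : Fin N, s'.2 i) =
      (Equiv.Perm.sign s.1) * Int.negOnePow (∑ i : Fin N, s.2 i) := by
    intro s s' h
    rw [hStep] at h
    obtain ⟨a, ha, b, hb, ε, hε, h1, h2⟩ := h
    have hab : a ≠ b := fun h => (Finset.disjoint_left.mp hdisj ha) (h ▸ hb)
    have hsum : (∑ i : Fin N, s'.2 i) = (∑ i : Fin N, s.2 i) + ε := by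
      rw [h2]
      rw [← Finset.sum_compl_add_sum {b} (f := Function.update s.2 b (s.2 b + ε)),
          ← Finset.sum_compl_add_sum {b} (f := s.2)]
      simp only [Finset.sum_singleton, Function.update_self]
      rw [Finset.sum_congr rfl (fun i hi => ?_), add_assoc]
      exact Function.update_of_ne (by simpa using hi) _ _
    have hsgn : Equiv.Perm.sign s'.1 = - Equiv.Perm.sign s.1 := by
      rw [h1, map_mul, Equiv.Perm.sign_swap hab, neg_one_mul]
    have hneg : Int.negOnePow (∑ i : Fin N, s'.2 i)
        = - Int.negOnePow (∑ i : Fin N, s.2 i) := by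
      rw [hsum]
      rw [Int.negOnePow_add]
      rcases hε with rfl | rfl <;> simp [Int.negOnePow_one] <;>
        rw [show (-1 : ℤ) = 0 - 1 by ring, Int.negOnePow_sub, Int.negOnePow_one] <;> simp
    rw [hsgn, hneg, neg_mul_neg]
  refine ⟨key, fun s h => ?_⟩
  induction h with
  | refl => simp
  | tail _ hst ih => rw [key _ _ hst, ih]
end

section
/- Suppose on each line of length L around a periodic boundary, the m vacancies on it can only undergo cyclic permutations, each cyclic permutation of the m vacancies contributing a sign factor (-1)^{m+1}, while the accompanying total displacement contributes (-1)^L. If L - m is odd (so (-1)^{L-m-1} = 1), then the combined factor from any cyclic permutation is +1, and hence the invariant I = sgn(Π)·(-1)^{Σ d_i} = 1 forces the electron permutation π to be even. -/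
/-- PBC evenness of ring exchange: On periodic lines of length
`L`, the vacancy permutation `π_v` consists of `k` cyclic permutations of the
`m` vacancies on a line, each contributing a sign `(-1)^{m+1}`, while each
accompanying full traversal contributes displacement sum `L`
(so `Σ d_i = k·L`). If `L - m` is odd (so `(-1)^{L-m-1} = 1`), then the
invariant `I = sgn(Φ)·(-1)^{Σ d_i} = 1` forces the electron permutation `π`
to be even. -/
theorem pbc_electron_permutation_even (N L m k : ℕ) (hm : m ≤ L)
    (hodd : Odd (L - m))
    (Φ π πv : Equiv.Perm (Fin N)) (d : Fin N → ℤ)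
    (hsign_v : Equiv.Perm.sign πv = ((-1 : ℤˣ) ^ (m + 1)) ^ k)
    (hdisp : (∑ i : Fin N, d i) = (k : ℤ) * (L : ℤ))
    (hdecomp : Φ = π * πv)
    (hinv : (Equiv.Perm.sign Φ) * Int.negOnePow (∑ i : Fin N, d i) = 1) :
    Equiv.Perm.sign π = 1 := by
  obtain ⟨t, ht⟩ := hodd
  have hE : Even (k * ((m + 1) + L)) := by
    refine Even.mul_left ⟨m + t + 1, by omega⟩ k
  have hneg : Int.negOnePow (∑ i : Fin N, d i) = (-1 : ℤˣ) ^ (k * L) := by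
    rw [hdisp]
    have : (k : ℤ) * (L : ℤ) = ((k * L : ℕ) : ℤ) := by push_cast; ring
    rw [this, Int.negOnePow_def, zpow_natCast]
  have hone : ((-1 : ℤˣ) ^ (m + 1)) ^ k * (-1 : ℤˣ) ^ (k * L) = 1 := by
    rw [← pow_mul, ← pow_add]
    have : (m + 1) * k + k * L = k * ((m + 1) + L) := by ring
    rw [this]
    exact Even.neg_one_pow hE
  rw [hdecomp, map_mul, hsign_v, hneg, mul_assoc, hone, mul_one] at hinv
  exact hinv
end
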